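/- Let k ≥ 1 and let σ₁, σ₂ be permutations of {1,…,k} whose product σ₁σ₂ is a k-cycle. Consider the bipartite graph whose vertex set is the disjoint union of the set of orbits of σ₁ and the set of orbits of σ₂, with an orbit c of σ₁ adjacent to an orbit d of σ₂ if and only if c ∩ d ≠ ∅ (and no edges between orbits of the same permutation). Then this graph is connected. -/

import Mathlib

open Equiv

/-- The orbit of `x` under the permutation `σ`. -/
def permOrbit {k : ℕ} (σ : Equiv.Perm (Fin k)) (x : Fin k) : Set (Fin k) :=
  {y | ∃ n : ℤ, (σ ^ n) x = y}

/-- The set of orbits of a permutation (fixed points count as singleton orbits). -/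
def permOrbits {k : ℕ} (σ : Equiv.Perm (Fin k)) : Set (Set (Fin k)) :=
  Set.range (permOrbit σ)

/-- `κ(σ)`: the number of orbits (cycles, counting fixed points) of `σ`. -/
noncomputable def kappa {k : ℕ} (σ : Equiv.Perm (Fin k)) : ℕ :=
  Nat.card (permOrbits σ)
/-- A full cycle: a permutation of `{1,…,k}` with a single orbit, namely everything. -/
def IsFullCycle {k : ℕ} (σ : Equiv.Perm (Fin k)) : Prop :=
  ∀ x y : Fin k, ∃ n : ℤ, (σ ^ n) x = y

/-- The bipartite graph on the disjoint union of the orbits of `σ₁` and the orbits of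
`σ₂`, where an orbit of `σ₁` is adjacent to an orbit of `σ₂` iff they intersect. -/
def orbitGraph {k : ℕ} (σ₁ σ₂ : Equiv.Perm (Fin k)) :
    SimpleGraph (↥(permOrbits σ₁) ⊕ ↥(permOrbits σ₂)) where
  Adj v w :=
    match v, w with
    | Sum.inl c, Sum.inr d => ((c : Set (Fin k)) ∩ (d : Set (Fin k))).Nonempty
    | Sum.inr d, Sum.inl c => ((c : Set (Fin k)) ∩ (d : Set (Fin k))).Nonempty
    | _, _ => False
  symm := ⟨by rintro (c | d) (c' | d') h <;> exact h⟩
  loopless := ⟨by rintro (c | d) h <;> exact h⟩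

/-- The `σ₁`-orbit vertex of `x`. -/
def V1 {k : ℕ} (σ₁ σ₂ : Equiv.Perm (Fin k)) (x : Fin k) :
    ↥(permOrbits σ₁) ⊕ ↥(permOrbits σ₂) :=
  Sum.inl ⟨permOrbit σ₁ x, ⟨x, rfl⟩⟩

/-- The `σ₂`-orbit vertex of `x`. -/
def V2 {k : ℕ} (σ₁ σ₂ : Equiv.Perm (Fin k)) (x : Fin k) :
    ↥(permOrbits σ₁) ⊕ ↥(permOrbits σ₂) :=
  Sum.inr ⟨permOrbit σ₂ x, ⟨x, rfl⟩⟩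

lemma mem_permOrbit_self {k : ℕ} (σ : Equiv.Perm (Fin k)) (x : Fin k) :
    x ∈ permOrbit σ x := ⟨0, rfl⟩

lemma adj12 {k : ℕ} (σ₁ σ₂ : Equiv.Perm (Fin k)) (x : Fin k) :
    (orbitGraph σ₁ σ₂).Adj (V1 σ₁ σ₂ x) (V2 σ₁ σ₂ x) :=
  ⟨x, mem_permOrbit_self σ₁ x, mem_permOrbit_self σ₂ x⟩

lemma adj21 {k : ℕ} (σ₁ σ₂ : Equiv.Perm (Fin k)) (x : Fin k) :
    (orbitGraph σ₁ σ₂).Adj (V2 σ₁ σ₂ x) (V1 σ₁ σ₂ ((σ₁ * σ₂) x)) := by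
  refine ⟨σ₂ x, ⟨-1, ?_⟩, ⟨1, ?_⟩⟩
  · simp [Perm.mul_apply]
  · simp

lemma reach_step {k : ℕ} (σ₁ σ₂ : Equiv.Perm (Fin k)) (x : Fin k) :
    (orbitGraph σ₁ σ₂).Reachable (V1 σ₁ σ₂ x) (V1 σ₁ σ₂ ((σ₁ * σ₂) x)) :=
  (adj12 σ₁ σ₂ x).reachable.trans (adj21 σ₁ σ₂ x).reachable

lemma reach_zpow {k : ℕ} (σ₁ σ₂ : Equiv.Perm (Fin k)) (x : Fin k) (n : ℤ) :
    (orbitGraph σ₁ σ₂).Reachable (V1 σ₁ σ₂ x) (V1 σ₁ σ₂ (((σ₁ * σ₂) ^ n) x)) := by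
  induction n using Int.induction_on with
  | zero => simpa using SimpleGraph.Reachable.refl _
  | succ n ih =>
      have e : ((σ₁ * σ₂) ^ ((n : ℤ) + 1)) x = (σ₁ * σ₂) (((σ₁ * σ₂) ^ (n : ℤ)) x) := by
        rw [add_comm, zpow_one_add, Perm.mul_apply]
      rw [e]
      exact ih.trans (reach_step σ₁ σ₂ _)
  | pred n ih =>
      have e : (σ₁ * σ₂) (((σ₁ * σ₂) ^ (-(n : ℤ) - 1)) x)
          = ((σ₁ * σ₂) ^ (-(n : ℤ))) x := by
        rw [← Perm.mul_apply, ← zpow_one_add]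
        norm_num
      have r := reach_step σ₁ σ₂ (((σ₁ * σ₂) ^ (-(n : ℤ) - 1)) x)
      rw [e] at r
      exact ih.trans r.symm

theorem orbitGraph_connected (k : ℕ) (hk : 1 ≤ k) (σ₁ σ₂ : Equiv.Perm (Fin k))
    (h : IsFullCycle (σ₁ * σ₂)) :
    (orbitGraph σ₁ σ₂).Connected := by
  have x₀ : Fin k := ⟨0, hk⟩
  -- every vertex is reachable from V1 x₀
  have key : ∀ v, (orbitGraph σ₁ σ₂).Reachable (V1 σ₁ σ₂ x₀) v := by
    have reach1 : ∀ x : Fin k, (orbitGraph σ₁ σ₂).Reachable (V1 σ₁ σ₂ x₀) (V1 σ₁ σ₂ x) := by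
      intro x
      obtain ⟨n, hn⟩ := h x₀ x
      have := reach_zpow σ₁ σ₂ x₀ n
      rwa [hn] at this
    rintro (⟨c, x, rfl⟩ | ⟨d, x, rfl⟩)
    · exact reach1 x
    · exact (reach1 x).trans (adj12 σ₁ σ₂ x).reachable
  rw [SimpleGraph.connected_iff]
  exact ⟨fun u v => (key u).symm.trans (key v), ⟨V1 σ₁ σ₂ x₀⟩⟩
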